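/- For each vertex u in a nontrivial digraph D (a digraph with at least two vertices), dac(D) − 1 ≤ dac(D − u) ≤ dac(D), where D − u is the digraph obtained from D by deleting the vertex u and all arcs incident with it. -/

import Mathlib

/-- The subset `S` of vertices induces an acyclic subdigraph of the digraph with
arc relation `A` (i.e. there is no directed cycle all of whose vertices lie in `S`). -/
def AcyclicSet {V : Type*} (A : V → V → Prop) (S : Set V) : Prop :=
  ∀ v : V, ¬ Relation.TransGen (fun x y => x ∈ S ∧ y ∈ S ∧ A x y) v v

/-- `c` is an acyclic vertex coloring of the digraph `A` with `k` colors: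
`c` is surjective and every chromatic class induces an acyclic subdigraph. -/
def IsAcyclicColoring {V : Type*} (A : V → V → Prop) {k : ℕ} (c : V → Fin k) : Prop :=
  Function.Surjective c ∧ ∀ i : Fin k, AcyclicSet A {v | c v = i}

/-- `c` is a complete vertex coloring of the digraph `A` with `k` colors:
`c` is surjective and for every ordered pair of distinct colors `(i, j)` there is
an arc `(u, v)` with `c u = i` and `c v = j`. -/
def IsCompleteColoring {V : Type*} (A : V → V → Prop) {k : ℕ} (c : V → Fin k) : Prop :=
  Function.Surjective c ∧
    ∀ i j : Fin k, i ≠ j → ∃ u v : V, A u v ∧ c u = i ∧ c v = j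

/-- The diachromatic number: the largest `k` admitting a complete acyclic `k`-coloring. -/
noncomputable def dac {V : Type*} (A : V → V → Prop) : ℕ :=
  sSup {k | ∃ c : V → Fin k, IsAcyclicColoring A c ∧ IsCompleteColoring A c}

/-- The dichromatic number: the smallest `k` admitting an acyclic `k`-coloring. -/
noncomputable def dc {V : Type*} (A : V → V → Prop) : ℕ :=
  sInf {k | ∃ c : V → Fin k, IsAcyclicColoring A c}

/-- The pseudoachromatic number: the largest `k` admitting a complete `k`-coloring. -/
noncomputable def psi {V : Type*} (A : V → V → Prop) : ℕ :=
  sSup {k | ∃ c : V → Fin k, IsCompleteColoring A c}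

/-- `A` is a tournament: no loops, and for distinct vertices exactly one of the
two possible arcs is present. -/
def IsTournament {V : Type*} (A : V → V → Prop) : Prop :=
  (∀ v : V, ¬ A v v) ∧ ∀ u v : V, u ≠ v → (A u v ↔ ¬ A v u)

section Aux

variable {V : Type*} {A : V → V → Prop}

lemma acyclicSet_subset {S T : Set V} (hS : AcyclicSet A S) (hTS : T ⊆ S) :
    AcyclicSet A T := fun v hv =>
  hS v (Relation.TransGen.mono (fun _ _ h => ⟨hTS h.1, hTS h.2.1, h.2.2⟩) v v hv)

lemma acyclicSet_singleton {u : V} (h : ¬ A u u) : AcyclicSet A {u} := by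
  intro v hv
  have : ∀ x y : V, (x ∈ ({u} : Set V) ∧ y ∈ ({u} : Set V) ∧ A x y) → False := by
    rintro x y ⟨rfl, rfl, ha⟩
    exact h ha
  cases hv with
  | single h' => exact this _ _ h'
  | tail _ h' => exact this _ _ h'

lemma acyclicSet_union {S T : Set V} (hS : AcyclicSet A S) (hT : AcyclicSet A T)
    (h : ∀ x ∈ S, ∀ y ∈ T, ¬ A x y) : AcyclicSet A (S ∪ T) := by
  intro v hv
  have claim1 : ∀ x y : V, Relation.TransGen
      (fun a b => a ∈ S ∪ T ∧ b ∈ S ∪ T ∧ A a b) x y → x ∈ S →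
      Relation.TransGen (fun a b => a ∈ S ∧ b ∈ S ∧ A a b) x y := by
    intro x y hxy
    induction hxy using Relation.TransGen.head_induction_on with
    | single h' =>
      intro hx
      have hy : y ∈ S := h'.2.1.resolve_right fun hyT => h _ hx _ hyT h'.2.2
      exact Relation.TransGen.single ⟨hx, hy, h'.2.2⟩
    | head h' _ ih =>
      intro hx
      rename_i b c _
      have hc : c ∈ S := h'.2.1.resolve_right fun hcT => h _ hx _ hcT h'.2.2
      exact (ih hc).head ⟨hx, hc, h'.2.2⟩
  have claim2 : ∀ x y : V, Relation.TransGen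
      (fun a b => a ∈ S ∪ T ∧ b ∈ S ∪ T ∧ A a b) x y → y ∈ T →
      Relation.TransGen (fun a b => a ∈ T ∧ b ∈ T ∧ A a b) x y := by
    intro x y hxy
    induction hxy with
    | single h' =>
      intro hy
      have hx : x ∈ T := h'.1.resolve_left fun hxS => h _ hxS _ hy h'.2.2
      exact Relation.TransGen.single ⟨hx, hy, h'.2.2⟩
    | tail _ h' ih =>
      intro hy
      have hb := h'.1.resolve_left fun hbS => h _ hbS _ hy h'.2.2
      exact (ih hb).tail ⟨hb, hy, h'.2.2⟩
  have hvST : v ∈ S ∪ T := by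
    cases hv with
    | single h' => exact h'.1
    | tail _ h' => exact h'.2.1
  cases hvST with
  | inl hvS => exact hS v (claim1 v v hv hvS)
  | inr hvT => exact hT v (claim2 v v hv hvT)

lemma acyclicSet_image {P : V → Prop} {S' : Set {v // P v}} :
    AcyclicSet (fun x y : {v // P v} => A x.1 y.1) S' ↔ AcyclicSet A (Subtype.val '' S') := by
  constructor
  · intro hac v hv
    have key : ∀ x y : V, Relation.TransGen
        (fun a b => a ∈ Subtype.val '' S' ∧ b ∈ Subtype.val '' S' ∧ A a b) x y →
        ∀ a b : {v // P v}, a.1 = x → b.1 = y →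
          Relation.TransGen (fun a b : {v // P v} => a ∈ S' ∧ b ∈ S' ∧ A a.1 b.1) a b := by
      intro x y hxy
      induction hxy with
      | single h' =>
        intro a b ha hb
        obtain ⟨a', ha'S, ha'v⟩ := h'.1
        obtain ⟨b', hb'S, hb'v⟩ := h'.2.1
        have : a = a' := Subtype.ext (ha.trans ha'v.symm)
        have hb' : b = b' := Subtype.ext (hb.trans hb'v.symm)
        subst this; subst hb'
        exact Relation.TransGen.single ⟨ha'S, hb'S, by rw [ha'v, hb'v]; exact h'.2.2⟩
      | tail hxb h' ih =>
        intro a b ha hb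
        obtain ⟨m', hm'S, hm'v⟩ := h'.1
        obtain ⟨b', hb'S, hb'v⟩ := h'.2.1
        have hb' : b = b' := Subtype.ext (hb.trans hb'v.symm)
        subst hb'
        exact (ih a m' ha hm'v).tail ⟨hm'S, hb'S, by rw [hm'v, hb'v]; exact h'.2.2⟩
    obtain ⟨a, haS, hav⟩ := by
      have : v ∈ Subtype.val '' S' := by
        cases hv with
        | single h' => exact h'.1
        | tail _ h' => exact h'.2.1
      exact this
    exact hac a (key v v hv a a hav hav)
  · intro hac a ha
    refine hac a.1 (ha.lift (f := Subtype.val) ?_)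
    intro x y h'
    exact ⟨⟨x, h'.1, rfl⟩, ⟨y, h'.2.1, rfl⟩, h'.2.2⟩

lemma merge_step {k : ℕ} (c : V → Fin (k + 2)) (hsurj : Function.Surjective c)
    (hacyc : ∀ m, AcyclicSet A {v | c v = m}) {i j : Fin (k + 2)} (hij : i ≠ j)
    (hno : (∀ x y, c x = i → c y = j → ¬ A x y) ∨ (∀ x y, c x = j → c y = i → ¬ A x y)) :
    ∃ d : V → Fin (k + 1), IsAcyclicColoring A d ∧
      ∀ m : Fin (k + 1), ∃ m' : Fin (k + 2), m' ≠ i ∧ {v | c v = m'} ⊆ {v | d v = m} := by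
  classical
  set e := Equiv.swap j (Fin.last (k + 1)) with he
  have hesymm : ∀ x, e.symm x = e x := fun x => by rw [he, Equiv.symm_swap]
  have heinj : Function.Injective e := e.injective
  have hlast : ∀ m : Fin (k + 2), e m = Fin.last (k + 1) ↔ m = j := by
    intro m
    constructor
    · intro h
      have h2 := congrArg e.symm h
      rwa [Equiv.symm_apply_apply, hesymm, he, Equiv.swap_apply_right] at h2
    · rintro rfl; rw [he, Equiv.swap_apply_left]
  have hei : e i ≠ Fin.last (k + 1) := fun h => hij ((hlast i).mp h)
  set g : Fin (k + 2) → Fin (k + 1) := fun m =>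
    if h : e m = Fin.last (k + 1) then (e i).castPred hei else (e m).castPred h with hg
  have hgi : g i = (e i).castPred hei := by rw [hg]; exact dif_neg hei
  have hgj : g j = (e i).castPred hei := by rw [hg]; exact dif_pos ((hlast j).mpr rfl)
  have hgother : ∀ m' (h : e m' ≠ Fin.last (k + 1)), g m' = (e m').castPred h := by
    intro m' h; rw [hg]; exact dif_neg h
  have fact1 : ∀ m', g m' = g i ↔ m' = i ∨ m' = j := by
    intro m'
    by_cases hmj : m' = j
    · subst hmj
      rw [hgj]
      tauto
    · have hml : e m' ≠ Fin.last (k + 1) := fun h => hmj ((hlast m').mp h)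
      rw [hgother m' hml, hgi, Fin.castPred_inj]
      constructor
      · intro h; exact Or.inl (heinj h)
      · rintro (rfl | rfl)
        · rfl
        · exact absurd rfl hmj
  have fact2 : ∀ (m : Fin (k + 1)), m ≠ g i → ∀ m', (g m' = m ↔ m' = e.symm m.castSucc) := by
    intro m hm m'
    have hcs : (m.castSucc : Fin (k + 2)) ≠ Fin.last (k + 1) := (Fin.castSucc_lt_last m).ne
    by_cases hmj : m' = j
    · subst hmj
      rw [hgj]
      rw [hgi] at hm
      constructor
      · intro h; exact absurd h.symm hm
      · intro h
        have := congrArg e h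
        rw [Equiv.apply_symm_apply, he, Equiv.swap_apply_left] at this
        exact absurd this.symm hcs
    · have hml : e m' ≠ Fin.last (k + 1) := fun h => hmj ((hlast m').mp h)
      rw [hgother m' hml, ← Fin.castSucc_inj, Fin.castSucc_castPred]
      constructor
      · intro h
        have := congrArg e.symm h
        rwa [Equiv.symm_apply_apply] at this
      · intro h
        have := congrArg e h
        rwa [Equiv.apply_symm_apply] at this
  refine ⟨fun v => g (c v), ⟨?_, ?_⟩, ?_⟩
  · intro m
    by_cases hm : m = g i
    · obtain ⟨v, hv⟩ := hsurj i
      exact ⟨v, by show g (c v) = m; rw [hv, hm]⟩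
    · obtain ⟨v, hv⟩ := hsurj (e.symm m.castSucc)
      exact ⟨v, show g (c v) = m from (fact2 m hm (c v)).mpr hv⟩
  · intro m
    by_cases hm : m = g i
    · subst hm
      have hset : {v | g (c v) = g i} = {v | c v = i} ∪ {v | c v = j} := by
        ext v; simp only [Set.mem_setOf_eq, Set.mem_union]; exact fact1 (c v)
      rw [hset]
      cases hno with
      | inl h => exact acyclicSet_union (hacyc i) (hacyc j) fun x hx y hy => h x y hx hy
      | inr h =>
        rw [Set.union_comm]
        exact acyclicSet_union (hacyc j) (hacyc i) fun x hx y hy => h x y hx hy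
    · have hset : {v | g (c v) = m} = {v | c v = e.symm m.castSucc} := by
        ext v; exact fact2 m hm (c v)
      rw [hset]; exact hacyc _
  · intro m
    by_cases hm : m = g i
    · refine ⟨j, fun h => hij h.symm, fun v hv => ?_⟩
      simp only [Set.mem_setOf_eq] at hv ⊢
      rw [hv, hm]
      exact (fact1 j).mpr (Or.inr rfl)
    · refine ⟨e.symm m.castSucc, ?_, fun v hv => (fact2 m hm (c v)).mpr hv⟩
      intro h
      apply hm
      have := congrArg e h
      rw [Equiv.apply_symm_apply] at this
      rw [hgi, ← Fin.castSucc_inj, Fin.castSucc_castPred]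
      exact this

lemma descend_to_complete :
    ∀ k : ℕ, ∀ c : V → Fin k, IsAcyclicColoring A c →
      ∃ m, ∃ d : V → Fin m, IsAcyclicColoring A d ∧ IsCompleteColoring A d := by
  intro k
  induction k using Nat.strong_induction_on with
  | _ k ih =>
    intro c hc
    by_cases hcomp : ∀ i j : Fin k, i ≠ j → ∃ x y : V, A x y ∧ c x = i ∧ c y = j
    · exact ⟨k, c, hc, hc.1, hcomp⟩
    · push_neg at hcomp
      obtain ⟨i, j, hij, hno⟩ := hcomp
      have h2 : 2 ≤ k := by
        by_contra h
        push_neg at h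
        interval_cases k
        · exact i.elim0
        · exact hij (Subsingleton.elim i j)
      obtain ⟨k', rfl⟩ : ∃ k', k = k' + 2 := ⟨k - 2, by omega⟩
      obtain ⟨d, hd, -⟩ := merge_step c hc.1 hc.2 hij
        (Or.inl fun x y hx hy ha => by
          have := hno x y ha
          tauto)
      exact ih (k' + 1) (by omega) d hd

lemma spectrum_nonempty [Fintype V] (hirr : ∀ v : V, ¬ A v v) :
    {k | ∃ c : V → Fin k, IsAcyclicColoring A c ∧ IsCompleteColoring A c}.Nonempty := by
  classical
  set e := Fintype.equivFin V with he
  have hac : IsAcyclicColoring A (⇑e) := by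
    refine ⟨e.surjective, fun i => ?_⟩
    have : {v | e v = i} = {e.symm i} := by
      ext v
      simp [Equiv.eq_symm_apply, eq_comm, Set.mem_setOf_eq]
    rw [this]
    exact acyclicSet_singleton (hirr _)
  obtain ⟨m, d, hd, hdc⟩ := descend_to_complete (Fintype.card V) e hac
  exact ⟨m, d, hd, hdc⟩

lemma spectrum_bddAbove [Fintype V] :
    BddAbove {k | ∃ c : V → Fin k, IsAcyclicColoring A c ∧ IsCompleteColoring A c} :=
  ⟨Fintype.card V, fun k hk => by
    obtain ⟨c, hc, -⟩ := hk
    simpa using Fintype.card_le_of_surjective c hc.1⟩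

lemma dac_mem [Fintype V] (hirr : ∀ v : V, ¬ A v v) :
    dac A ∈ {k | ∃ c : V → Fin k, IsAcyclicColoring A c ∧ IsCompleteColoring A c} :=
  Nat.sSup_mem (spectrum_nonempty hirr) spectrum_bddAbove

end Aux

/-- For each vertex `u` in a nontrivial digraph `D`,
`dac(D) - 1 ≤ dac(D - u) ≤ dac(D)`. -/
theorem stmt4 {V : Type*} [Fintype V] [DecidableEq V] (A : V → V → Prop)
    (hirr : ∀ v : V, ¬ A v v)
    (hn : 2 ≤ Fintype.card V) (u : V) :
    dac A - 1 ≤ dac (fun x y : {v : V // v ≠ u} => A x.1 y.1) ∧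
      dac (fun x y : {v : V // v ≠ u} => A x.1 y.1) ≤ dac A := by
  classical
  set A' : {v : V // v ≠ u} → {v : V // v ≠ u} → Prop := fun x y => A x.1 y.1 with hA'
  have hirr' : ∀ x : {v : V // v ≠ u}, ¬ A' x x := fun x => hirr x.1
  -- key2 : from a complete acyclic coloring of D - u we get one of D at least as large
  have key2 : ∀ (n : ℕ) (c' : {v : V // v ≠ u} → Fin n), IsAcyclicColoring A' c' →
      IsCompleteColoring A' c' →
      ∃ K, (∃ c : V → Fin K, IsAcyclicColoring A c ∧ IsCompleteColoring A c) ∧ n ≤ K := by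
    intro n c' hac hco
    by_cases ha : ∀ m : Fin n,
        (∃ x : {v : V // v ≠ u}, c' x = m ∧ A u x.1) ∧ (∃ y : {v : V // v ≠ u}, c' y = m ∧ A y.1 u)
    · -- give u a brand new color
      set cNew : V → Fin (n + 1) := fun v =>
        if h : v = u then Fin.last n else (c' ⟨v, h⟩).castSucc with hcNew
      have hvalN : ∀ x : {v : V // v ≠ u}, cNew x.1 = (c' x).castSucc := fun x => dif_neg x.2
      have hvalU : cNew u = Fin.last n := dif_pos rfl
      have hclassL : {v | cNew v = Fin.last n} = {u} := by
        ext v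
        simp only [Set.mem_setOf_eq, Set.mem_singleton_iff]
        constructor
        · intro h
          by_contra hvu
          rw [hvalN ⟨v, hvu⟩] at h
          exact (Fin.castSucc_lt_last _).ne h
        · rintro rfl; exact hvalU
      have hclassC : ∀ m : Fin n,
          {v | cNew v = m.castSucc} = Subtype.val '' {x | c' x = m} := by
        intro m
        ext v
        simp only [Set.mem_setOf_eq, Set.mem_image]
        constructor
        · intro h
          have hvu : v ≠ u := by
            rintro rfl
            rw [hvalU] at h
            exact (Fin.castSucc_lt_last m).ne h.symm
          refine ⟨⟨v, hvu⟩, ?_, rfl⟩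
          have := (hvalN ⟨v, hvu⟩).symm.trans h
          exact Fin.castSucc_inj.mp this
        · rintro ⟨x, hx, rfl⟩
          rw [hvalN x, hx]
      refine ⟨n + 1, ⟨cNew, ⟨?_, ?_⟩, ?_, ?_⟩, Nat.le_succ n⟩
      · -- surjective
        intro i
        by_cases hi : i = Fin.last n
        · exact ⟨u, by rw [hvalU, hi]⟩
        · obtain ⟨x, hx⟩ := hac.1 (i.castPred hi)
          exact ⟨x.1, by rw [hvalN x, hx, Fin.castSucc_castPred]⟩
      · -- acyclic
        intro i
        by_cases hi : i = Fin.last n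
        · rw [hi, hclassL]
          exact acyclicSet_singleton (hirr u)
        · rw [show i = (i.castPred hi).castSucc from (Fin.castSucc_castPred i hi).symm,
            hclassC]
          exact acyclicSet_image.mp (hac.2 (i.castPred hi))
      · -- surjective again
        intro i
        by_cases hi : i = Fin.last n
        · exact ⟨u, by rw [hvalU, hi]⟩
        · obtain ⟨x, hx⟩ := hac.1 (i.castPred hi)
          exact ⟨x.1, by rw [hvalN x, hx, Fin.castSucc_castPred]⟩
      · -- complete
        intro i j hij
        by_cases hi : i = Fin.last n
        · have hj : j ≠ Fin.last n := fun h => hij (hi.trans h.symm)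
          obtain ⟨x, hx, hxA⟩ := (ha (j.castPred hj)).1
          exact ⟨u, x.1, hxA, by rw [hvalU, hi], by rw [hvalN x, hx, Fin.castSucc_castPred]⟩
        · by_cases hj : j = Fin.last n
          · obtain ⟨y, hy, hyA⟩ := (ha (i.castPred hi)).2
            exact ⟨y.1, u, hyA, by rw [hvalN y, hy, Fin.castSucc_castPred], by rw [hvalU, hj]⟩
          · have hne : i.castPred hi ≠ j.castPred hj := fun h => hij (Fin.castPred_inj.mp h)
            obtain ⟨x, y, hxy, hx, hy⟩ := hco.2 _ _ hne
            exact ⟨x.1, y.1, hxy, by rw [hvalN x, hx, Fin.castSucc_castPred],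
              by rw [hvalN y, hy, Fin.castSucc_castPred]⟩
    · -- absorb u into a class j with missing arcs from/to u
      push_neg at ha
      obtain ⟨j, hj⟩ := ha
      set cAb : V → Fin n := fun v => if h : v = u then j else c' ⟨v, h⟩ with hcAb
      have hval : ∀ x : {v : V // v ≠ u}, cAb x.1 = c' x := fun x => dif_neg x.2
      have hvalU : cAb u = j := dif_pos rfl
      have hclass : ∀ m, m ≠ j → {v | cAb v = m} = Subtype.val '' {x | c' x = m} := by
        intro m hm
        ext v
        simp only [Set.mem_setOf_eq, Set.mem_image]
        constructor
        · intro h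
          have hvu : v ≠ u := by rintro rfl; rw [hvalU] at h; exact hm h.symm
          exact ⟨⟨v, hvu⟩, (hval ⟨v, hvu⟩).symm.trans h, rfl⟩
        · rintro ⟨x, hx, rfl⟩; rw [hval x]; exact hx
      have hclassj : {v | cAb v = j} = Subtype.val '' {x | c' x = j} ∪ {u} := by
        ext v
        simp only [Set.mem_setOf_eq, Set.mem_image, Set.mem_union, Set.mem_singleton_iff]
        constructor
        · intro h
          by_cases hvu : v = u
          · exact Or.inr hvu
          · exact Or.inl ⟨⟨v, hvu⟩, (hval ⟨v, hvu⟩).symm.trans h, rfl⟩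
        · rintro (⟨x, hx, rfl⟩ | rfl)
          · rw [hval x]; exact hx
          · exact hvalU
      have hacj : AcyclicSet A {v | cAb v = j} := by
        rw [hclassj]
        have himg : AcyclicSet A (Subtype.val '' {x | c' x = j}) :=
          acyclicSet_image.mp (hac.2 j)
        by_cases hout : ∃ x : {v : V // v ≠ u}, c' x = j ∧ A u x.1
        · -- then no arcs from class j to u
          have hin := hj hout
          refine acyclicSet_union himg (acyclicSet_singleton (hirr u)) ?_
          rintro x ⟨x', hx', rfl⟩ y rfl
          exact hin x' hx'
        · -- no arcs from u to class j
          push_neg at hout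
          rw [Set.union_comm]
          refine acyclicSet_union (acyclicSet_singleton (hirr u)) himg ?_
          rintro x rfl y ⟨y', hy', rfl⟩
          exact hout y' hy'
      refine ⟨n, ⟨cAb, ⟨?_, ?_⟩, ?_, ?_⟩, le_refl n⟩
      · intro m
        obtain ⟨x, hx⟩ := hac.1 m
        exact ⟨x.1, (hval x).trans hx⟩
      · intro m
        by_cases hm : m = j
        · rw [hm]; exact hacj
        · rw [hclass m hm]
          exact acyclicSet_image.mp (hac.2 m)
      · intro m
        obtain ⟨x, hx⟩ := hac.1 m
        exact ⟨x.1, (hval x).trans hx⟩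
      · intro i₁ i₂ h12
        obtain ⟨x, y, hxy, hx, hy⟩ := hco.2 i₁ i₂ h12
        exact ⟨x.1, y.1, hxy, (hval x).trans hx, (hval y).trans hy⟩
  -- key1 : from a complete acyclic coloring of D we get one of D - u losing at most one color
  have key1 : ∀ (n : ℕ) (c : V → Fin n), IsAcyclicColoring A c → IsCompleteColoring A c →
      ∃ K, (∃ d : {v : V // v ≠ u} → Fin K, IsAcyclicColoring A' d ∧ IsCompleteColoring A' d) ∧
        n - 1 ≤ K := by
    intro n c hac hco
    by_cases hcase : ∃ w : V, w ≠ u ∧ c w = c u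
    · -- the class of u contains another vertex : restrict and possibly merge
      obtain ⟨w, hwu, hwc⟩ := hcase
      set cr : {v : V // v ≠ u} → Fin n := fun x => c x.1 with hcr
      have hsurj : Function.Surjective cr := by
        intro m
        by_cases hm : m = c u
        · exact ⟨⟨w, hwu⟩, hwc.trans hm.symm⟩
        · obtain ⟨v, hv⟩ := hac.1 m
          have hvu : v ≠ u := by rintro rfl; exact hm hv.symm
          exact ⟨⟨v, hvu⟩, hv⟩
      have hacyc : ∀ m, AcyclicSet A' {x | cr x = m} := by
        intro m
        refine acyclicSet_image.mpr (acyclicSet_subset (hac.2 m) ?_)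
        rintro v ⟨x, hx, rfl⟩
        exact hx
      by_cases hcomp : ∀ i j : Fin n, i ≠ j →
          ∃ x y : {v : V // v ≠ u}, A' x y ∧ cr x = i ∧ cr y = j
      · exact ⟨n, ⟨cr, ⟨hsurj, hacyc⟩, hsurj, hcomp⟩, Nat.sub_le n 1⟩
      · push_neg at hcomp
        obtain ⟨i, j, hij, hno⟩ := hcomp
        have hiu : i = c u ∨ j = c u := by
          by_contra h
          push_neg at h
          obtain ⟨x, y, hxy, hx, hy⟩ := hco.2 i j hij
          have hxu : x ≠ u := by rintro rfl; exact h.1 hx.symm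
          have hyu : y ≠ u := by rintro rfl; exact h.2 hy.symm
          exact hno ⟨x, hxu⟩ ⟨y, hyu⟩ hxy hx hy
        have h2 : 2 ≤ n := by
          by_contra h
          push_neg at h
          interval_cases n
          · exact i.elim0
          · exact hij (Subsingleton.elim i j)
        obtain ⟨k, rfl⟩ : ∃ k, n = k + 2 := ⟨n - 2, by omega⟩
        have hmerge : ∃ d : {v : V // v ≠ u} → Fin (k + 1), IsAcyclicColoring A' d ∧
            ∀ m : Fin (k + 1), ∃ m', m' ≠ c u ∧ {x | cr x = m'} ⊆ {x | d x = m} := by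
          cases hiu with
          | inl hi =>
            subst hi
            exact merge_step cr hsurj hacyc hij (Or.inl fun x y hx hy hA => hno x y hA hx hy)
          | inr hjj =>
            subst hjj
            exact merge_step cr hsurj hacyc (Ne.symm hij)
              (Or.inr fun x y hx hy hA => hno x y hA hx hy)
        obtain ⟨d, hd, hwit⟩ := hmerge
        refine ⟨k + 1, ⟨d, hd, hd.1, ?_⟩, by omega⟩
        intro m₁ m₂ hm
        obtain ⟨m₁', hm₁u, hsub₁⟩ := hwit m₁
        obtain ⟨m₂', hm₂u, hsub₂⟩ := hwit m₂
        have hne : m₁' ≠ m₂' := by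
          rintro rfl
          obtain ⟨x, hx⟩ := hsurj m₁'
          exact hm ((hsub₁ hx).symm.trans (hsub₂ hx))
        obtain ⟨x, y, hxy, hx, hy⟩ := hco.2 m₁' m₂' hne
        have hxu : x ≠ u := by rintro rfl; exact hm₁u hx.symm
        have hyu : y ≠ u := by rintro rfl; exact hm₂u hy.symm
        exact ⟨⟨x, hxu⟩, ⟨y, hyu⟩, hxy, hsub₁ hx, hsub₂ hy⟩
    · -- the class of u is exactly {u} : drop it
      push_neg at hcase
      obtain ⟨w, hwu⟩ := Fintype.exists_ne_of_one_lt_card (by omega) u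
      have hwc : c w ≠ c u := hcase w hwu
      have h2 : 2 ≤ n := by
        by_contra h
        push_neg at h
        interval_cases n
        · exact (c u).elim0
        · exact hwc (Subsingleton.elim _ _)
      obtain ⟨k, rfl⟩ : ∃ k, n = k + 2 := ⟨n - 2, by omega⟩
      set e := Equiv.swap (c u) (Fin.last (k + 1)) with he
      have hesymm : ∀ x, e.symm x = e x := fun x => by rw [he, Equiv.symm_swap]
      have hlast : ∀ m : Fin (k + 2), e m = Fin.last (k + 1) ↔ m = c u := by
        intro m
        constructor
        · intro h
          have h2 := congrArg e.symm h
          rwa [Equiv.symm_apply_apply, hesymm, he, Equiv.swap_apply_right] at h2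
        · rintro rfl; rw [he, Equiv.swap_apply_left]
      have hcv : ∀ x : {v : V // v ≠ u}, e (c x.1) ≠ Fin.last (k + 1) :=
        fun x h => hcase x.1 x.2 ((hlast (c x.1)).mp h)
      set c' : {v : V // v ≠ u} → Fin (k + 1) := fun x => (e (c x.1)).castPred (hcv x) with hc'
      have hkey : ∀ (x : {v : V // v ≠ u}) (m : Fin (k + 1)),
          c' x = m ↔ c x.1 = e.symm m.castSucc := by
        intro x m
        rw [hc']
        simp only []
        rw [← Fin.castSucc_inj, Fin.castSucc_castPred]
        constructor
        · intro h
          have := congrArg e.symm h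
          rwa [Equiv.symm_apply_apply] at this
        · intro h
          have := congrArg e h
          rwa [Equiv.apply_symm_apply] at this
      have hmu : ∀ m : Fin (k + 1), e.symm m.castSucc ≠ c u := by
        intro m h
        have := congrArg e h
        rw [Equiv.apply_symm_apply, (hlast (c u)).mpr rfl] at this
        exact (Fin.castSucc_lt_last m).ne this
      have hsurj : Function.Surjective c' := by
        intro m
        obtain ⟨v, hv⟩ := hac.1 (e.symm m.castSucc)
        have hvu : v ≠ u := by rintro rfl; exact hmu m hv.symm
        exact ⟨⟨v, hvu⟩, (hkey ⟨v, hvu⟩ m).mpr hv⟩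
      have hacyc : ∀ m, AcyclicSet A' {x | c' x = m} := by
        intro m
        refine acyclicSet_image.mpr (acyclicSet_subset (hac.2 (e.symm m.castSucc)) ?_)
        rintro v ⟨x, hx, rfl⟩
        exact (hkey x m).mp hx
      refine ⟨k + 1, ⟨c', ⟨hsurj, hacyc⟩, hsurj, ?_⟩, by omega⟩
      intro m₁ m₂ hm
      have hne : e.symm m₁.castSucc ≠ e.symm m₂.castSucc := by
        intro h
        exact hm (Fin.castSucc_inj.mp (e.symm.injective h))
      obtain ⟨x, y, hxy, hx, hy⟩ := hco.2 _ _ hne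
      have hxu : x ≠ u := by rintro rfl; exact hmu m₁ hx.symm
      have hyu : y ≠ u := by rintro rfl; exact hmu m₂ hy.symm
      exact ⟨⟨x, hxu⟩, ⟨y, hyu⟩, hxy, (hkey ⟨x, hxu⟩ m₁).mpr hx, (hkey ⟨y, hyu⟩ m₂).mpr hy⟩
  obtain ⟨c, hcac, hcco⟩ := dac_mem hirr (A := A)
  obtain ⟨c', hc'ac, hc'co⟩ := dac_mem hirr' (A := A')
  constructor
  · obtain ⟨K, hK, hKle⟩ := key1 (dac A) c hcac hcco
    exact le_trans hKle (le_csSup spectrum_bddAbove hK)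
  · obtain ⟨K, hK, hKle⟩ := key2 (dac A') c' hc'ac hc'co
    exact le_trans hKle (le_csSup spectrum_bddAbove hK)
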